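/- Let k > ℓ ≥ 2, let α be the dominant root of Ψ_k and β the dominant root of Ψ_ℓ. If integers n, m with m ≥ 7 satisfy (2α−1)f_k(α)α^(n−1) = (2β−1)f_ℓ(β)β^(m−1) (i.e. the associated linear form Λ vanishes), then a contradiction follows; in particular, Λ = α^(n−1)·β^{−(m−1)}·(2α−1)f_k(α)((2β−1)f_ℓ(β))^{−1} − 1 is nonzero. -/

import Mathlib

open Finset IntermediateField

set_option maxHeartbeats 1600000
set_option synthInstance.maxHeartbeats 400000

/-- The complex absolute value, as an absolute value (the norm). -/
noncomputable def Complex.abs : AbsoluteValue ℂ ℝ := NormedField.toAbsoluteValue ℂ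

@[simp] lemma Complex.abs_apply (z : ℂ) : Complex.abs z = ‖z‖ := rfl

lemma Complex.abs_ofReal (r : ℝ) : Complex.abs (r : ℂ) = |r| := by simp

lemma Complex.abs_natCast (n : ℕ) : Complex.abs (n : ℂ) = n := by simp

lemma Complex.sq_abs (z : ℂ) : Complex.abs z ^ 2 = Complex.normSq z := Complex.sq_norm z

lemma Complex.abs.sum_le {ι : Type*} (t : Finset ι) (f : ι → ℂ) :
    Complex.abs (∑ i ∈ t, f i) ≤ ∑ i ∈ t, Complex.abs (f i) := norm_sum_le t f

/-- The expression (2x-1) f_s(x) over any field. -/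
def Aex (s : ℕ) {F : Type*} [Field F] (x : F) : F :=
  (2*x - 1) * ((x - 1) / (2 + ((s : F) + 1) * (x - 2)))

lemma sixteen_pow (s : ℕ) (hs : 2 ≤ s) : (s : ℝ) < (8/5)^s := by
  induction s, hs using Nat.le_induction with
  | base => norm_num
  | succ s hs ih =>
    have h5 : (2:ℝ) ≤ s := by exact_mod_cast hs
    push_cast
    calc (s:ℝ) + 1 ≤ (8/5) * s := by nlinarith
    _ < (8/5) * (8/5)^s := by nlinarith
    _ = (8/5)^(s+1) := by ring

section Dom

variable {s : ℕ} {x : ℝ} (hs : 2 ≤ s) (hx1 : 1 < x) (hx2 : x < 2)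
  (hx : x^s * (2 - x) = 1)

include hs hx1 hx2 hx

lemma dom_gt : 8/5 < x := by
  have h2 : x^2 ≤ x^s := pow_le_pow_right₀ hx1.le hs
  have h : x^2 * (2-x) ≤ 1 := by
    calc x^2*(2-x) ≤ x^s*(2-x) := by nlinarith
    _ = 1 := hx
  have k1 : 0 ≤ x^3 - 2*x^2 + 1 := by nlinarith
  have k2 : 0 ≤ x^2 - x - 1 := by
    by_contra hneg
    push_neg at hneg
    have := mul_neg_of_pos_of_neg (sub_pos.2 hx1) hneg
    nlinarith
  nlinarith

lemma dom_pow_gt : (s:ℝ) < x^s := by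
  have := sixteen_pow s hs
  have h : (8/5:ℝ)^s < x^s :=
    pow_lt_pow_left₀ (dom_gt hs hx1 hx2 hx) (by norm_num) (by omega)
  linarith

lemma dom_small : (s:ℝ) * (2 - x) < 1 := by
  have h := dom_pow_gt hs hx1 hx2 hx
  have h2 : (0:ℝ) < 2 - x := by linarith
  have hs0 : (0:ℝ) < s := by exact_mod_cast (by omega : 0 < s)
  calc (s:ℝ) * (2-x) < x^s * (2-x) := by nlinarith
  _ = 1 := hx

lemma dom_peak : 2*(s:ℝ) < ((s:ℝ)+1) * x := by
  have h := dom_small hs hx1 hx2 hx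
  nlinarith

lemma dom_spow : (s:ℝ) < x^(s+1) := by
  have h := dom_peak hs hx1 hx2 hx
  have h2 : (0:ℝ) < 2 - x := by linarith
  have : (s:ℝ)*(2-x) < x := by nlinarith
  have hxs : x^s * (2-x) = 1 := hx
  have : x^(s+1) = x * x^s := by ring
  rw [this]
  -- s < x * x^s  ⟺  s(2-x) < x * x^s (2-x) = x
  nlinarith [pow_pos (by linarith : (0:ℝ) < x) s]

lemma q_gt_one {r : ℝ} (hr1 : 1 < r) (hrx : r < x) : 1 < r^s * (2 - r) := by
  classical
  set f : ℝ → ℝ := fun t => 2*t^s - t^(s+1) with hf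
  have hs1 : s - 1 + 1 = s := by omega
  have hderiv : ∀ t : ℝ, HasDerivAt f (2*((s:ℝ)*t^(s-1)) - ((s:ℝ)+1)*t^s) t := by
    intro t
    have h1 := (hasDerivAt_pow s t).const_mul (2:ℝ)
    have h2 := hasDerivAt_pow (s+1) t
    have := h1.sub h2
    simp only [Nat.add_sub_cancel, Nat.cast_add, Nat.cast_one] at this
    exact this
  have hcont : Continuous f := by fun_prop
  set c : ℝ := 2*(s:ℝ)/((s:ℝ)+1) with hc
  have hsR : (2:ℝ) ≤ s := by exact_mod_cast hs
  have hc1 : 1 ≤ c := by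
    rw [hc, le_div_iff₀ (by linarith)]; linarith
  have hc2 : c < 2 := by
    rw [hc, div_lt_iff₀ (by linarith)]; linarith
  have hmono : StrictMonoOn f (Set.Icc 1 c) := by
    apply strictMonoOn_of_deriv_pos (convex_Icc 1 c) hcont.continuousOn
    intro t ht
    rw [interior_Icc] at ht
    rw [(hderiv t).deriv]
    have ht1 : 1 < t := ht.1
    have htc : t < c := ht.2
    have htpos : 0 < t := by linarith
    have hts : ((s:ℝ)+1) * t < 2*s := by
      rw [hc, lt_div_iff₀ (by linarith)] at htc; nlinarith
    have hpow : 0 < t^(s-1) := pow_pos htpos _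
    have : t^s = t^(s-1) * t := by rw [← pow_succ, hs1]
    nlinarith
  have hanti : StrictAntiOn f (Set.Icc c 2) := by
    apply strictAntiOn_of_deriv_neg (convex_Icc c 2) hcont.continuousOn
    intro t ht
    rw [interior_Icc] at ht
    rw [(hderiv t).deriv]
    have htc : c < t := ht.1
    have htpos : 0 < t := by linarith
    have hts : 2*(s:ℝ) < ((s:ℝ)+1) * t := by
      rw [hc, div_lt_iff₀ (by linarith)] at htc; nlinarith
    have hpow : 0 < t^(s-1) := pow_pos htpos _
    have : t^s = t^(s-1) * t := by rw [← pow_succ, hs1]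
    nlinarith
  have hfr : f r = r^s * (2-r) := by show 2*r^s - r^(s+1) = r^s*(2-r); ring
  have hf1 : f 1 = 1 := by show 2*(1:ℝ)^s - 1^(s+1) = 1; norm_num
  have hfx : f x = 1 := by show 2*x^s - x^(s+1) = 1; linear_combination hx
  rcases le_or_gt r c with h | h
  · have := hmono (Set.mem_Icc.2 ⟨le_refl 1, hc1⟩) (Set.mem_Icc.2 ⟨hr1.le, h⟩) hr1
    rw [hf1, hfr] at this; linarith
  · have hxc : x ∈ Set.Icc c 2 := Set.mem_Icc.2 ⟨by linarith, hx2.le⟩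
    have hrc : r ∈ Set.Icc c 2 := Set.mem_Icc.2 ⟨h.le, by linarith⟩
    have := hanti hrc hxc hrx
    rw [hfx, hfr] at this; linarith

end Dom

section Dom2

variable {s : ℕ} {x : ℝ} (hs : 2 ≤ s) (hx1 : 1 < x) (hx2 : x < 2)
  (hx : x^s * (2 - x) = 1)

include hs hx1 hx2 hx

lemma dom_den_pos : 0 < 2 + ((s:ℝ)+1)*(x-2) := by
  have h := dom_small hs hx1 hx2 hx
  nlinarith

lemma Aex_nonneg : 0 ≤ Aex s x := by
  have hd := dom_den_pos hs hx1 hx2 hx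
  rw [Aex]
  exact mul_nonneg (by linarith) (div_nonneg (by linarith) hd.le)

lemma Aex_lt_three : Aex s x < 3 := by
  have hd := dom_den_pos hs hx1 hx2 hx
  have hsm := dom_small hs hx1 hx2 hx
  rw [Aex]
  have hf : (x - 1) / (2 + ((s:ℝ)+1)*(x-2)) < 1 := by
    rw [div_lt_one hd]; nlinarith
  have hf0 : 0 ≤ (x - 1) / (2 + ((s:ℝ)+1)*(x-2)) := div_nonneg (by linarith) hd.le
  nlinarith

lemma Aex_gt : 11/10 < Aex s x := by
  have hd := dom_den_pos hs hx1 hx2 hx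
  have hg := dom_gt hs hx1 hx2 hx
  have hsR : (2:ℝ) ≤ s := by exact_mod_cast hs
  rw [Aex]
  have hf : (1:ℝ)/2 < (x - 1) / (2 + ((s:ℝ)+1)*(x-2)) := by
    rw [div_lt_div_iff₀ (by norm_num) hd]; nlinarith
  have h1 : (0:ℝ) < 2*x - 1 := by linarith
  calc (11/10 : ℝ) < (2*x-1) * (1/2) := by nlinarith
  _ < (2*x-1) * ((x - 1) / (2 + ((s:ℝ)+1)*(x-2))) := by
    exact mul_lt_mul_of_pos_left hf h1

end Dom2

lemma croot (s : ℕ) (hs : 2 ≤ s) {x : ℝ} (hx1 : 1 < x) (hx2 : x < 2)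
    (hx : x^s*(2-x) = 1) {z : ℂ} (hz : z^s * (2 - z) = 1) (hz1 : z ≠ 1)
    (hzx : z ≠ (x:ℂ)) : Complex.abs z < 1 := by
  by_contra hcon
  push_neg at hcon
  set r := Complex.abs z with hr
  have hx0 : (0:ℝ) < x := by linarith
  have habs : r^s * Complex.abs (2 - z) = 1 := by
    rw [← map_pow, ← map_mul, hz, map_one]
  have hz0 : z ≠ 0 := by
    intro h0
    rw [h0] at hz
    simp [zero_pow (by omega : s ≠ 0)] at hz
  rcases eq_or_lt_of_le hcon with heq | hgt
  · -- |z| = 1 forces z = 1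
    have habs1 : Complex.abs (2 - z) = 1 := by
      rw [← heq] at habs; simpa using habs
    have h1 : Complex.normSq (2 - z) = 1 := by
      rw [← Complex.sq_abs, habs1]; norm_num
    have h2 : Complex.normSq z = 1 := by
      rw [← Complex.sq_abs, ← hr, ← heq]; norm_num
    rw [Complex.normSq_apply] at h2
    have h3 : (2 - z).re = 2 - z.re := by simp
    have h4 : (2 - z).im = - z.im := by simp
    rw [Complex.normSq_apply, h3, h4] at h1
    have hre : z.re = 1 := by nlinarith
    have him : z.im = 0 := by nlinarith
    exact hz1 (Complex.ext (by simp [hre]) (by simp [him]))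
  · -- |z| > 1
    have h2r : 2 - r ≤ Complex.abs (2 - z) := by
      have := Complex.abs.add_le (2 - z) z
      simp only [sub_add_cancel] at this
      have h2 : Complex.abs 2 = 2 := by norm_num
      rw [h2] at this
      linarith
    have hq : r^s * (2 - r) ≤ 1 := by
      rcases le_or_gt r 2 with h | h
      · calc r^s * (2-r) ≤ r^s * Complex.abs (2 - z) :=
            mul_le_mul_of_nonneg_left h2r (pow_nonneg (Complex.abs.nonneg z) s)
        _ = 1 := habs
      · have : r^s * (2 - r) ≤ 0 :=
          mul_nonpos_of_nonneg_of_nonpos (pow_nonneg (Complex.abs.nonneg z) s) (by linarith)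
        linarith
    have hrx : x ≤ r := by
      by_contra hc
      push_neg at hc
      have := q_gt_one hs hx1 hx2 hx hgt hc
      linarith
    -- the key algebraic identity
    have hxC : (x:ℂ)^s * (2 - (x:ℂ)) = 1 := by
      exact_mod_cast hx
    have hne : z - (x:ℂ) ≠ 0 := sub_ne_zero.2 hzx
    have key2 : ((x:ℂ)^s * z^s) * (z - (x:ℂ))
        = (∑ i ∈ Finset.range s, z^i * (x:ℂ)^(s-1-i)) * (z - (x:ℂ)) := by
      rw [geom_sum₂_mul]
      linear_combination z^s * hxC - (x:ℂ)^s * hz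
    have key := mul_right_cancel₀ hne key2
    -- take absolute values
    have hL : Complex.abs ((x:ℂ)^s * z^s) = x^s * r^s := by
      rw [map_mul, map_pow, map_pow, Complex.abs_ofReal, abs_of_pos hx0]
    have hR : Complex.abs (∑ i ∈ Finset.range s, z^i * (x:ℂ)^(s-1-i))
        ≤ (s:ℝ) * r^(s-1) := by
      calc Complex.abs (∑ i ∈ Finset.range s, z^i * (x:ℂ)^(s-1-i))
          ≤ ∑ i ∈ Finset.range s, Complex.abs (z^i * (x:ℂ)^(s-1-i)) :=
            Complex.abs.sum_le _ _
      _ ≤ ∑ i ∈ Finset.range s, r^(s-1) := by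
          apply Finset.sum_le_sum
          intro i hi
          rw [Finset.mem_range] at hi
          rw [map_mul, map_pow, map_pow, Complex.abs_ofReal, abs_of_pos hx0]
          calc r^i * x^(s-1-i) ≤ r^i * r^(s-1-i) := by
                apply mul_le_mul_of_nonneg_left
                  (pow_le_pow_left₀ hx0.le hrx _) (pow_nonneg (Complex.abs.nonneg z) i)
          _ = r^(i + (s-1-i)) := by rw [pow_add]
          _ = r^(s-1) := by congr 1; omega
      _ = (s:ℝ) * r^(s-1) := by
          rw [Finset.sum_const, Finset.card_range, nsmul_eq_mul]
    have hmain : x^s * r^s ≤ (s:ℝ) * r^(s-1) := by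
      rw [← hL]; rw [key] at *; exact le_trans (le_of_eq (congrArg _ rfl)) hR
    have hrpow : (0:ℝ) < r^(s-1) := pow_pos (by linarith) _
    have hss : r^s = r^(s-1) * r := by rw [← pow_succ]; congr 1; omega
    have hfin : x^s * r ≤ (s:ℝ) := by
      rw [hss] at hmain
      have := (mul_le_mul_iff_left₀ hrpow).1 (by nlinarith : (x^s * r) * r^(s-1) ≤ (s:ℝ) * r^(s-1))
      exact this
    have hspow := dom_spow hs hx1 hx2 hx
    have hxs : (0:ℝ) < x^s := pow_pos hx0 _
    have hstep : x^(s+1) = x^s * x := pow_succ x s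
    have hstep2 : x^s * x ≤ x^s * r := mul_le_mul_of_nonneg_left hrx hxs.le
    linarith

lemma conj_bound (s : ℕ) (hs : 2 ≤ s) {z : ℂ} (hz : Complex.abs z ≤ 1) :
    Complex.abs (Aex s z) ≤ 6 := by
  have h1 : Complex.abs (2*z - 1) ≤ 3 := by
    calc Complex.abs (2*z - 1) ≤ Complex.abs (2*z) + Complex.abs 1 :=
      Complex.abs.sub_le_add _ _
    _ ≤ 3 := by
      rw [map_mul, map_one]
      have : Complex.abs 2 = 2 := by norm_num
      rw [this]; linarith
  have h2 : Complex.abs (z - 1) ≤ 2 := by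
    calc Complex.abs (z - 1) ≤ Complex.abs z + Complex.abs 1 := Complex.abs.sub_le_add _ _
    _ ≤ 2 := by rw [map_one]; linarith
  have hden : (1:ℝ) ≤ Complex.abs (2 + ((s:ℂ)+1)*(z-2)) := by
    have hrw : (2:ℂ) + ((s:ℂ)+1)*(z-2) = ((s:ℂ)+1)*z - 2*(s:ℂ) := by ring
    rw [hrw]
    have ht : Complex.abs (2*(s:ℂ)) - Complex.abs (((s:ℂ)+1)*z)
        ≤ Complex.abs (((s:ℂ)+1)*z - 2*(s:ℂ)) := by
      have h := Complex.abs.le_sub (2*(s:ℂ)) (((s:ℂ)+1)*z)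
      have heq : Complex.abs (2*(s:ℂ) - ((s:ℂ)+1)*z) = Complex.abs (((s:ℂ)+1)*z - 2*(s:ℂ)) := by
        rw [← Complex.abs.map_neg]; congr 1; ring
      linarith
    have hs1 : Complex.abs (((s:ℂ)+1)*z) ≤ (s:ℝ)+1 := by
      rw [map_mul]
      have : Complex.abs ((s:ℂ)+1) = (s:ℝ)+1 := by
        have : ((s:ℂ)+1) = (((s+1:ℕ)):ℂ) := by push_cast; ring
        rw [this, Complex.abs_natCast]; push_cast; ring
      rw [this]
      nlinarith [Complex.abs.nonneg z]
    have hs2 : Complex.abs (2*(s:ℂ)) = 2*(s:ℝ) := by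
      rw [map_mul, Complex.abs_natCast]
      norm_num
    have hsR : (2:ℝ) ≤ s := by exact_mod_cast hs
    linarith
  rw [Aex, map_mul, map_div₀]
  have hnum : Complex.abs (2*z-1) * (Complex.abs (z-1) / Complex.abs (2 + ((s:ℂ)+1)*(z-2)))
      ≤ 3 * 2 := by
    have hd : Complex.abs (z-1) / Complex.abs (2 + ((s:ℂ)+1)*(z-2)) ≤ 2 := by
      calc Complex.abs (z-1) / Complex.abs (2 + ((s:ℂ)+1)*(z-2))
          ≤ Complex.abs (z-1) / 1 := by
            apply div_le_div_of_nonneg_left (Complex.abs.nonneg _) (by norm_num) hden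
      _ ≤ 2 := by rw [div_one]; exact h2
    have := mul_le_mul h1 hd (div_nonneg (Complex.abs.nonneg _) (Complex.abs.nonneg _)) (by norm_num)
    linarith
  linarith

open Polynomial in
noncomputable def psiZ (s : ℕ) : Polynomial ℤ :=
  Polynomial.X^s - ∑ i ∈ Finset.range s, Polynomial.X^i

lemma psiZ_degree_sum (s : ℕ) : (∑ i ∈ Finset.range s, (Polynomial.X : Polynomial ℤ)^i).degree < (s:ℕ) + 1 := by
  apply lt_of_le_of_lt (Polynomial.degree_sum_le _ _)
  rw [Finset.sup_lt_iff (by exact_mod_cast WithBot.bot_lt_coe (s+1))]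
  intro i hi
  rw [Polynomial.degree_X_pow]
  exact_mod_cast Nat.lt_succ_of_lt (Finset.mem_range.1 hi)

lemma psiZ_degree_sum' (s : ℕ) (hs : 1 ≤ s) :
    (∑ i ∈ Finset.range s, (Polynomial.X : Polynomial ℤ)^i).degree < (s:ℕ) := by
  apply lt_of_le_of_lt (Polynomial.degree_sum_le _ _)
  rw [Finset.sup_lt_iff (by exact_mod_cast WithBot.bot_lt_coe s)]
  intro i hi
  rw [Polynomial.degree_X_pow]
  exact_mod_cast Finset.mem_range.1 hi

lemma psiZ_monic (s : ℕ) (hs : 1 ≤ s) : (psiZ s).Monic :=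
  Polynomial.monic_X_pow_sub (psiZ_degree_sum' s hs)

lemma psiZ_ne_zero (s : ℕ) (hs : 1 ≤ s) : psiZ s ≠ 0 := (psiZ_monic s hs).ne_zero

lemma psiZ_natDegree (s : ℕ) (hs : 1 ≤ s) : (psiZ s).natDegree = s := by
  rw [psiZ]
  have h2 : (∑ i ∈ Finset.range s, (Polynomial.X : Polynomial ℤ)^i).natDegree
      < (Polynomial.X^s : Polynomial ℤ).natDegree := by
    rw [Polynomial.natDegree_X_pow]
    by_cases h0 : (∑ i ∈ Finset.range s, (Polynomial.X : Polynomial ℤ)^i) = 0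
    · rw [h0]; simpa using (show 0 < s by omega)
    · exact (Polynomial.natDegree_lt_iff_degree_lt h0).2 (psiZ_degree_sum' s hs)
  rw [Polynomial.natDegree_sub_eq_left_of_natDegree_lt h2, Polynomial.natDegree_X_pow]

lemma psiZ_aeval {R : Type*} [CommRing R] (s : ℕ) (z : R) :
    Polynomial.aeval z (psiZ s) = z^s - ∑ i ∈ Finset.range s, z^i := by
  simp [psiZ]

lemma psiZ_eval_zero (s : ℕ) (hs : 1 ≤ s) : (psiZ s).eval 0 = -1 := by
  have h : ∑ i ∈ Finset.range s, (0:ℤ)^i = 1 := by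
    rw [Finset.sum_eq_single 0]
    · norm_num
    · intro b _ hb; exact zero_pow hb
    · intro h; exact absurd (Finset.mem_range.2 (by omega)) h
  have : (psiZ s).eval 0 = (0:ℤ)^s - ∑ i ∈ Finset.range s, (0:ℤ)^i := by
    simp [psiZ]
  rw [this, h, zero_pow (by omega : s ≠ 0)]
  ring

lemma aux_prod_le_one (M : Multiset ℝ) (h : ∀ y ∈ M, 0 ≤ y ∧ y ≤ 1) :
    0 ≤ M.prod ∧ M.prod ≤ 1 := by
  induction M using Multiset.induction_on with
  | empty => simp
  | cons a M ih =>
    simp only [Multiset.prod_cons]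
    have ha := h a (Multiset.mem_cons_self a M)
    have ihh := ih (fun y hy => h y (Multiset.mem_cons_of_mem hy))
    refine ⟨mul_nonneg ha.1 ihh.1, ?_⟩
    calc a * M.prod ≤ 1 * 1 := mul_le_mul ha.2 ihh.2 ihh.1 (by norm_num)
    _ = 1 := by norm_num

lemma aux_prod_lt_one (M : Multiset ℝ) (hne : M ≠ 0) (h : ∀ y ∈ M, 0 ≤ y ∧ y < 1) :
    M.prod < 1 := by
  obtain ⟨a, ha⟩ := Multiset.exists_mem_of_ne_zero hne
  obtain ⟨M', rfl⟩ := Multiset.exists_cons_of_mem ha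
  rw [Multiset.prod_cons]
  have h1 := h a (Multiset.mem_cons_self a M')
  have h2 := aux_prod_le_one M' (fun y hy =>
    ⟨(h y (Multiset.mem_cons_of_mem hy)).1, (h y (Multiset.mem_cons_of_mem hy)).2.le⟩)
  nlinarith [h1.1, h1.2, h2.1, h2.2]

/-- The minimal polynomial of the dominant root over ℤ is the full polynomial Ψ_s;
    hence the degree of ℚ(α) is s. -/
lemma finrank_adjoin_dominant (s : ℕ) (hs : 2 ≤ s) {x : ℝ} (hx1 : 1 < x) (hx2 : x < 2)
    (hroot : x^s = ∑ i ∈ Finset.range s, x^i) :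
    Module.finrank ℚ ℚ⟮((x:ℂ))⟯ = s := by
  have hx : x^s * (2-x) = 1 := by
    have g := geom_sum_mul x s
    rw [← hroot] at g
    linear_combination -g
  set a : ℂ := (x:ℂ) with ha
  have hsum : (a:ℂ)^s = ∑ i ∈ Finset.range s, a^i := by
    rw [ha]
    exact_mod_cast hroot
  have haev : Polynomial.aeval a (psiZ s) = 0 := by
    rw [psiZ_aeval, hsum]; ring
  have haint : IsIntegral ℤ a :=
    ⟨psiZ s, psiZ_monic s (by omega), by rw [← Polynomial.aeval_def]; exact haev⟩
  have hdvd : minpoly ℤ a ∣ psiZ s := minpoly.isIntegrallyClosed_dvd haint haev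
  obtain ⟨q, hpq⟩ := hdvd
  set p := minpoly ℤ a with hp
  have hpm : p.Monic := minpoly.monic haint
  have hqm : q.Monic := hpm.of_mul_monic_left (hpq ▸ psiZ_monic s (by omega))
  have hmul : p.eval 0 * q.eval 0 = -1 := by
    rw [← Polynomial.eval_mul, ← hpq, psiZ_eval_zero s (by omega)]
  have hqunit : q.eval 0 = 1 ∨ q.eval 0 = -1 := by
    apply Int.isUnit_iff.1
    apply isUnit_of_dvd_unit (y := (-1:ℤ)) ⟨p.eval 0, by rw [mul_comm] at hmul; exact hmul.symm⟩
    exact (isUnit_one).neg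
  -- show q is constant
  have hqdeg : q.natDegree = 0 := by
    by_contra hqdeg
    -- map everything to ℂ
    set ι := (Int.castRingHom ℂ) with hι
    set qC := q.map ι with hqC
    set pC := p.map ι with hpC
    set psiC := (psiZ s).map ι with hpsiC
    have hpsiCfact : psiC = pC * qC := by rw [hpsiC, hpq, Polynomial.map_mul]
    have hpsiC_eq : psiC = Polynomial.X^s - ∑ i ∈ Finset.range s, Polynomial.X^i := by
      rw [hpsiC, psiZ, Polynomial.map_sub, Polynomial.map_pow, Polynomial.map_X,
        Polynomial.map_sum]
      simp
    have hqCm : qC.Monic := hqm.map ι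
    have hfact : qC = (Multiset.map (fun r => Polynomial.X - Polynomial.C r) qC.roots).prod :=
      (IsAlgClosed.splits qC).eq_prod_roots_of_monic hqCm
    have hcard : Multiset.card qC.roots = q.natDegree := by
      have h := (IsAlgClosed.splits qC).natDegree_eq_card_roots
      have h2 : qC.natDegree = q.natDegree := hqm.natDegree_map ι
      rw [← h, h2]
    -- ψ'(a) ≠ 0 via the auxiliary polynomial (X-1)ψ
    have hpsiC_a : Polynomial.eval a psiC = 0 := by
      have h := haev
      rw [Polynomial.aeval_def, algebraMap_int_eq] at h
      rw [hpsiC, Polynomial.eval_map]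
      exact h
    have hderiv_ne : Polynomial.eval a (Polynomial.derivative psiC) ≠ 0 := by
      have hHid : (Polynomial.X - 1) * psiC
          = Polynomial.X^(s+1) - Polynomial.C 2 * Polynomial.X^s + 1 := by
        rw [hpsiC_eq]
        have g := geom_sum_mul (Polynomial.X : Polynomial ℂ) s
        have hC2 : (Polynomial.C (2:ℂ)) = (2 : Polynomial ℂ) := map_ofNat Polynomial.C 2
        rw [hC2]
        linear_combination -g
      have hL : Polynomial.eval a (Polynomial.derivative ((Polynomial.X - 1) * psiC))
          = (a - 1) * Polynomial.eval a (Polynomial.derivative psiC) := by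
        rw [Polynomial.derivative_mul]
        simp [hpsiC_a]
      have hR : Polynomial.eval a (Polynomial.derivative
          (Polynomial.X^(s+1) - Polynomial.C 2 * Polynomial.X^s + 1))
          = ((s:ℂ)+1)*a^s - 2*((s:ℂ)*a^(s-1)) := by
        rw [Polynomial.derivative_add, Polynomial.derivative_sub,
          Polynomial.derivative_one, Polynomial.derivative_X_pow,
          Polynomial.derivative_mul, Polynomial.derivative_C,
          Polynomial.derivative_X_pow]
        simp only [Nat.add_sub_cancel, add_zero, zero_mul, zero_add]
        simp only [Polynomial.eval_sub, Polynomial.eval_add, Polynomial.eval_mul,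
          Polynomial.eval_pow, Polynomial.eval_X, Polynomial.eval_C,
          Polynomial.eval_natCast]
        push_cast
        ring
      have heval : (a - 1) * Polynomial.eval a (Polynomial.derivative psiC)
          = ((s:ℂ)+1)*a^s - 2*((s:ℂ)*a^(s-1)) := by
        rw [← hL, hHid, hR]
      intro hD
      rw [hD, mul_zero] at heval
      have hxpow : (0:ℝ) < x^(s-1) := pow_pos (by linarith) _
      have hpk := dom_peak hs hx1 hx2 hx
      have hss : s - 1 + 1 = s := by omega
      have hreal : ((s:ℝ)+1) * x^s - 2*((s:ℝ) * x^(s-1)) ≠ 0 := by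
        have h1 : x^s = x^(s-1) * x := by rw [← pow_succ, hss]
        rw [h1]
        have h2 : ((s:ℝ)+1) * (x^(s-1)*x) - 2*((s:ℝ)*x^(s-1))
            = x^(s-1) * (((s:ℝ)+1)*x - 2*s) := by ring
        rw [h2]
        apply mul_ne_zero (ne_of_gt hxpow)
        nlinarith
      apply hreal
      have hc : ((s:ℂ)+1) * (x:ℂ)^s - 2*((s:ℂ) * (x:ℂ)^(s-1)) = 0 := by
        rw [← ha]; exact heval.symm
      exact_mod_cast hc
    -- every root of qC has |r| < 1
    have hroots : ∀ r ∈ qC.roots, Complex.abs r < 1 := by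
      intro r hr
      have hrroot : qC.eval r = 0 := (Polynomial.isRoot_of_mem_roots hr)
      have hrpsi : Polynomial.eval r psiC = 0 := by
        rw [hpsiCfact, Polynomial.eval_mul, hrroot, mul_zero]
      have hrpsi' : r^s = ∑ i ∈ Finset.range s, r^i := by
        rw [hpsiC_eq] at hrpsi
        simp only [Polynomial.eval_sub, Polynomial.eval_pow, Polynomial.eval_X,
          Polynomial.eval_finset_sum] at hrpsi
        exact sub_eq_zero.mp hrpsi
      have hzeq : r^s * (2 - r) = 1 := by
        have g := geom_sum_mul r s
        rw [← hrpsi'] at g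
        linear_combination -g
      have hr1 : r ≠ 1 := by
        intro h1
        rw [h1] at hrpsi'
        have hee : (1:ℂ) = (s:ℂ) := by simpa using hrpsi'
        have : (1:ℕ) = s := by exact_mod_cast hee
        omega
      have hra : r ≠ a := by
        intro hra
        -- then a is a double root of psiC
        have hqa : Polynomial.eval a qC = 0 := by rw [← hra]; exact hrroot
        have hpa : Polynomial.eval a pC = 0 := by
          have h := minpoly.aeval ℤ a
          rw [Polynomial.aeval_def, algebraMap_int_eq] at h
          rw [hpC, Polynomial.eval_map]
          exact h
        have : Polynomial.eval a (Polynomial.derivative psiC) = 0 := by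
          rw [hpsiCfact, Polynomial.derivative_mul, Polynomial.eval_add,
            Polynomial.eval_mul, Polynomial.eval_mul, hpa, hqa]
          ring
        exact hderiv_ne this
      exact croot s hs hx1 hx2 hx hzeq hr1 hra
    -- product of |roots| is |q(0)| = 1, but < 1
    have habs0 : Complex.abs (qC.eval 0) = 1 := by
      have : qC.eval 0 = ((q.eval 0 : ℤ) : ℂ) := by
        rw [hqC, Polynomial.eval_zero_map]
        simp
      rw [this]
      rcases hqunit with h | h <;> rw [h] <;> norm_num
    have hprod : Complex.abs (qC.eval 0)
        = (Multiset.map (fun r => Complex.abs (-r)) qC.roots).prod := by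
      conv_lhs => rw [hfact]
      rw [Polynomial.eval_multiset_prod]
      rw [Multiset.map_map]
      rw [map_multiset_prod Complex.abs]
      rw [Multiset.map_map]
      congr 1
      apply Multiset.map_congr rfl
      intro r hr
      simp
    have hlt : (Multiset.map (fun r => Complex.abs (-r)) qC.roots).prod < 1 := by
      apply aux_prod_lt_one
      · intro hzero
        rw [Multiset.map_eq_zero] at hzero
        rw [hzero] at hcard
        simp at hcard
        omega
      · intro y hy
        rw [Multiset.mem_map] at hy
        obtain ⟨r, hr, rfl⟩ := hy
        rw [map_neg_eq_map]
        exact ⟨Complex.abs.nonneg r, hroots r hr⟩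
    rw [habs0] at hprod
    linarith [hprod, hlt]
  -- q is the constant 1, so p = psiZ s
  have hq1 : q = 1 := Polynomial.eq_one_of_monic_natDegree_zero hqm hqdeg
  rw [hq1, mul_one] at hpq
  have haintQ : IsIntegral ℚ a := haint.tower_top
  rw [IntermediateField.adjoin.finrank haintQ]
  rw [minpoly.isIntegrallyClosed_eq_field_fractions' ℚ haint]
  rw [(minpoly.monic haint).natDegree_map]
  rw [← hp, ← hpq, psiZ_natDegree s (by omega)]

lemma psi_root_eq (s : ℕ) {z : ℂ} (h : Polynomial.aeval z (psiZ s) = 0) :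
    z^s * (2 - z) = 1 := by
  rw [psiZ_aeval] at h
  have hz : z^s = ∑ i ∈ Finset.range s, z^i := sub_eq_zero.mp h
  have g := geom_sum_mul z s
  rw [← hz] at g
  linear_combination -g

lemma psi_one_ne (s : ℕ) (hs : 2 ≤ s) : Polynomial.aeval (1:ℂ) (psiZ s) ≠ 0 := by
  rw [psiZ_aeval]
  simp only [one_pow, Finset.sum_const, Finset.card_range, nsmul_eq_mul, mul_one]
  intro h
  have : (1:ℂ) = (s:ℂ) := sub_eq_zero.mp h
  have : (1:ℕ) = s := by exact_mod_cast this
  omega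

lemma zpow_le_one_aux {r : ℝ} (h0 : 0 ≤ r) (h1 : r ≤ 1) {t : ℤ} (ht : 0 ≤ t) :
    r^t ≤ 1 := by
  rcases eq_or_lt_of_le h0 with h | h
  · rcases eq_or_lt_of_le ht with h2 | h2
    · rw [← h2]; norm_num
    · rw [← h, zero_zpow _ (by omega)]; norm_num
  · exact zpow_le_one₀ h h1 ht

lemma map_Aex {F K : Type*} [Field F] [Field K] (ψ : F →+* K) (s : ℕ) (x : F) :
    ψ (Aex s x) = Aex s (ψ x) := by
  simp [Aex, map_mul, map_div₀, map_sub, map_add, map_ofNat, map_natCast, map_one]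

lemma transfer {F : Type*} [Field F] (ι ψ : F →+* ℂ) (u v : F) (k l : ℕ) (n m : ℤ)
    (h : (ι u)^(n-1) * Aex k (ι u) = (ι v)^(m-1) * Aex l (ι v)) :
    (ψ u)^(n-1) * Aex k (ψ u) = (ψ v)^(m-1) * Aex l (ψ v) := by
  set w : F := u^(n-1) * Aex k u - v^(m-1) * Aex l v with hw
  have hmap : ∀ φ : F →+* ℂ, φ w = (φ u)^(n-1) * Aex k (φ u) - (φ v)^(m-1) * Aex l (φ v) := by
    intro φ
    rw [hw, map_sub, map_mul, map_mul, map_zpow₀, map_zpow₀, map_Aex, map_Aex]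
  have hw0 : w = 0 := by
    apply ι.injective
    rw [map_zero, hmap ι, h, sub_self]
  have hψ := hmap ψ
  rw [hw0, map_zero] at hψ
  exact sub_eq_zero.mp hψ.symm

lemma exists_conj (E : IntermediateField ℚ ℂ) (c e : ℂ) (heE : e ∈ E)
    (hcint : IsIntegral ℚ c) (hcE : c ∉ E) :
    ∃ c' : ℂ, c' ≠ c ∧
      (∀ P : Polynomial ℤ, Polynomial.aeval c P = 0 → Polynomial.aeval c' P = 0) ∧
      (∀ (k l : ℕ) (n m : ℤ),
        e^(n-1) * Aex k e = c^(m-1) * Aex l c →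
        e^(n-1) * Aex k e = c'^(m-1) * Aex l c') ∧
      (∀ (k l : ℕ) (n m : ℤ),
        c^(n-1) * Aex k c = e^(m-1) * Aex l e →
        c'^(n-1) * Aex k c' = e^(m-1) * Aex l e) := by
  have hci : IsIntegral (↥E) c := hcint.tower_top
  haveI : NoZeroSMulDivisors (↥E) ℂ :=
    inferInstance
  have hμdeg : 2 ≤ (minpoly (↥E) c).natDegree := by
    have h1 := minpoly.natDegree_pos hci
    rcases Nat.lt_or_ge (minpoly (↥E) c).natDegree 2 with h | h
    · exfalso
      have hdeg1 : (minpoly (↥E) c).natDegree = 1 := by omega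
      have heq := (minpoly.monic hci).eq_X_add_C hdeg1
      have haev := minpoly.aeval (↥E) c
      rw [heq] at haev
      simp only [map_add, Polynomial.aeval_X, Polynomial.aeval_C] at haev
      apply hcE
      have hceq : c = - (algebraMap (↥E) ℂ) ((minpoly (↥E) c).coeff 0) := by
        linear_combination haev
      rw [hceq]
      exact neg_mem (SetLike.coe_mem ((minpoly (↥E) c).coeff 0))
    · exact h
  have hsep : (minpoly (↥E) c).Separable := (minpoly.irreducible hci).separable
  have hcR : c ∈ (minpoly (↥E) c).aroots ℂ := by
    rw [Polynomial.mem_aroots]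
    exact ⟨minpoly.ne_zero hci, minpoly.aeval _ _⟩
  have hnodup : ((minpoly (↥E) c).aroots ℂ).Nodup := Polynomial.nodup_roots (hsep.map)
  have hcardR : Multiset.card ((minpoly (↥E) c).aroots ℂ) = (minpoly (↥E) c).natDegree :=
    by rw [← (minpoly.monic hci).natDegree_map (algebraMap (↥E) ℂ)]
       exact ((IsAlgClosed.splits _).natDegree_eq_card_roots).symm
  obtain ⟨T, hT⟩ := Multiset.exists_cons_of_mem hcR
  have hTne : T ≠ 0 := by
    intro h0
    rw [hT, h0] at hcardR
    simp at hcardR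
    omega
  obtain ⟨c', hc'T⟩ := Multiset.exists_mem_of_ne_zero hTne
  have hc'R : c' ∈ (minpoly (↥E) c).aroots ℂ := by rw [hT]; exact Multiset.mem_cons_of_mem hc'T
  have hc'ne : c' ≠ c := by
    intro he
    rw [hT, Multiset.nodup_cons] at hnodup
    exact hnodup.1 (he ▸ hc'T)
  set σ := (IntermediateField.algHomAdjoinIntegralEquiv (↥E) (K := ℂ) hci).symm ⟨c', hc'R⟩
    with hσ
  have hσgen : σ (IntermediateField.AdjoinSimple.gen (↥E) c) = c' :=
    IntermediateField.algHomAdjoinIntegralEquiv_symm_apply_gen (↥E) hci ⟨c', hc'R⟩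
  set ι : ↥((↥E)⟮c⟯) →+* ℂ := algebraMap _ ℂ with hι
  set ψ : ↥((↥E)⟮c⟯) →+* ℂ := σ.toRingHom with hψ
  set xc : ↥((↥E)⟮c⟯) := IntermediateField.AdjoinSimple.gen (↥E) c with hxc
  set ye : ↥((↥E)⟮c⟯) := algebraMap (↥E) _ (⟨e, heE⟩ : ↥E) with hye
  have hιx : ι xc = c := IntermediateField.AdjoinSimple.algebraMap_gen (↥E) c
  have hψx : ψ xc = c' := hσgen
  have hιy : ι ye = e := by
    rw [hye, hι]
    rw [← IsScalarTower.algebraMap_apply]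
    rfl
  have hψy : ψ ye = e := by
    rw [hye, hψ]
    show σ (algebraMap (↥E) _ (⟨e, heE⟩ : ↥E)) = e
    rw [AlgHom.commutes]
    rfl
  refine ⟨c', hc'ne, ?_, ?_, ?_⟩
  · intro P hP
    have hPE : Polynomial.aeval c (P.map (algebraMap ℤ (↥E))) = 0 := by
      rw [Polynomial.aeval_map_algebraMap]; exact hP
    obtain ⟨t, ht⟩ := minpoly.dvd (↥E) c hPE
    have hc'μ : Polynomial.aeval c' (minpoly (↥E) c) = 0 := (Polynomial.mem_aroots.1 hc'R).2
    have h0 : Polynomial.aeval c' (P.map (algebraMap ℤ (↥E))) = 0 := by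
      rw [ht, map_mul, hc'μ, zero_mul]
    rwa [Polynomial.aeval_map_algebraMap] at h0
  · intro k l n m h
    have := transfer ι ψ ye xc k l n m (by rw [hιy, hιx]; exact h)
    rwa [hψy, hψx] at this
  · intro k l n m h
    have := transfer ι ψ xc ye k l n m (by rw [hιy, hιx]; exact h)
    rwa [hψy, hψx] at this

/-- Nonvanishing of the linear form: for k > ℓ ≥ 2 with dominant roots α of Ψ_k
    and β of Ψ_ℓ, and integers n, m with m ≥ 7, the quantity
    Λ = α^(n−1)·β^(−(m−1))·(2α−1)f_k(α)·((2β−1)f_ℓ(β))⁻¹ − 1 is nonzero. -/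
theorem linear_form_nonzero (k l : ℕ) (hl : 2 ≤ l) (hkl : l < k)
    (α β : ℝ) (hα1 : 1 < α) (hα2 : α < 2)
    (hαroot : α ^ k = ∑ i ∈ Finset.range k, α ^ i)
    (hβ1 : 1 < β) (hβ2 : β < 2)
    (hβroot : β ^ l = ∑ i ∈ Finset.range l, β ^ i)
    (n m : ℤ) (hm : 7 ≤ m) :
    α ^ (n - 1) * β ^ (-(m - 1)) *
        ((2 * α - 1) * ((α - 1) / (2 + (k + 1) * (α - 2)))) *
        ((2 * β - 1) * ((β - 1) / (2 + (l + 1) * (β - 2))))⁻¹ - 1 ≠ 0 := by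
  intro h
  have hk2 : 2 ≤ k := by omega
  have hαx : α^k * (2 - α) = 1 := by
    have g := geom_sum_mul α k
    rw [← hαroot] at g
    linear_combination -g
  have hβx : β^l * (2 - β) = 1 := by
    have g := geom_sum_mul β l
    rw [← hβroot] at g
    linear_combination -g
  have hA3 := Aex_lt_three hk2 hα1 hα2 hαx
  have hA0 := Aex_nonneg hk2 hα1 hα2 hαx
  have hB1 := Aex_gt hl hβ1 hβ2 hβx
  have hβ16 := dom_gt hl hβ1 hβ2 hβx
  have hβpos : (0:ℝ) < β := by linarith
  have hβzpow : β^(m-1) ≠ 0 := zpow_ne_zero _ (by linarith : β ≠ 0)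
  have hBne : Aex l β ≠ 0 := by
    rw [Aex]; rw [Aex] at hB1; linarith
  -- fold the expression into Aex notation and derive the key equation
  rw [show ((2 * α - 1) * ((α - 1) / (2 + ((k:ℝ) + 1) * (α - 2)))) = Aex k α from rfl,
    show ((2 * β - 1) * ((β - 1) / (2 + ((l:ℝ) + 1) * (β - 2)))) = Aex l β from rfl] at h
  have h1 : α^(n-1) * (β^(m-1))⁻¹ * Aex k α * (Aex l β)⁻¹ = 1 := by
    rw [← zpow_neg]
    linarith
  have key : α^(n-1) * Aex k α = β^(m-1) * Aex l β := by
    field_simp at h1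
    linarith
  -- the right-hand side is large
  have hpow6 : (8/5:ℝ)^6 ≤ β^(6:ℕ) := pow_le_pow_left₀ (by norm_num) (le_of_lt hβ16) 6
  have hznat : β^((6:ℕ):ℤ) = β^(6:ℕ) := zpow_natCast β 6
  have hz6 : β^((6:ℕ):ℤ) ≤ β^(m-1) := zpow_le_zpow_right₀ (by linarith : 1 ≤ β) (by omega)
  have hb6 : (16:ℝ) < β^(m-1) := by
    rw [hznat] at hz6
    nlinarith
  have hmpos : (0:ℝ) < β^(m-1) := lt_trans (by norm_num) hb6
  have hRHS : 17 < β^(m-1) * Aex l β := by nlinarith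
  rcases le_or_gt n 1 with hn | hn
  · -- small n: purely real contradiction
    have hle : α^(n-1) ≤ 1 := zpow_le_one_of_nonpos₀ (le_of_lt hα1) (by omega)
    have hsmall : α^(n-1) * Aex k α ≤ Aex k α := mul_le_of_le_one_left hA0 hle
    linarith
  · -- n ≥ 2 : Galois conjugation argument
    set a : ℂ := (α:ℂ) with haC
    set b : ℂ := (β:ℂ) with hbC
    have keyC : a^(n-1) * Aex k a = b^(m-1) * Aex l b := by
      have hmapped := congrArg (Complex.ofRealHom) key
      rwa [map_mul, map_mul, map_zpow₀, map_zpow₀, map_Aex, map_Aex,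
        Complex.ofRealHom_eq_coe, Complex.ofRealHom_eq_coe] at hmapped
    have habs_big : 17 < Complex.abs (b^(m-1) * Aex l b) := by
      have hcast : b^(m-1) * Aex l b = ((β^(m-1) * Aex l β : ℝ) : ℂ) := by
        have hh := map_Aex Complex.ofRealHom l β
        rw [Complex.ofRealHom_eq_coe] at hh
        rw [hbC, Complex.ofReal_mul, Complex.ofReal_zpow, hh]
        simp [Complex.ofRealHom_eq_coe]
      rw [hcast, Complex.abs_ofReal, abs_of_pos (by nlinarith)]
      nlinarith
    have haevZ : Polynomial.aeval a (psiZ k) = 0 := by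
      have hsum : a^k = ∑ i ∈ Finset.range k, a^i := by
        rw [haC]; exact_mod_cast hαroot
      rw [psiZ_aeval, hsum, sub_self]
    have hbevZ : Polynomial.aeval b (psiZ l) = 0 := by
      have hsum : b^l = ∑ i ∈ Finset.range l, b^i := by
        rw [hbC]; exact_mod_cast hβroot
      rw [psiZ_aeval, hsum, sub_self]
    have haintZ : IsIntegral ℤ a :=
      ⟨psiZ k, psiZ_monic k (by omega), by rw [← Polynomial.aeval_def]; exact haevZ⟩
    have hbintZ : IsIntegral ℤ b :=
      ⟨psiZ l, psiZ_monic l (by omega), by rw [← Polynomial.aeval_def]; exact hbevZ⟩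
    have haintQ : IsIntegral ℚ a := haintZ.tower_top
    have hbintQ : IsIntegral ℚ b := hbintZ.tower_top
    by_cases hbE : b ∈ ℚ⟮a⟯
    · by_cases haF : a ∈ ℚ⟮b⟯
      · -- the two fields coincide: contradiction on degrees
        have hfields : ℚ⟮a⟯ = ℚ⟮b⟯ :=
          le_antisymm (IntermediateField.adjoin_simple_le_iff.2 haF)
            (IntermediateField.adjoin_simple_le_iff.2 hbE)
        have h2 := finrank_adjoin_dominant k hk2 hα1 hα2 hαroot
        have h3 := finrank_adjoin_dominant l hl hβ1 hβ2 hβroot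
        rw [← haC] at h2
        rw [← hbC] at h3
        rw [hfields] at h2
        omega
      · -- conjugate a over ℚ(b)
        obtain ⟨a', ha'ne, ha'P, _, htr2⟩ :=
          exists_conj ℚ⟮b⟯ a b (IntermediateField.mem_adjoin_simple_self ℚ b) haintQ haF
        have heq2 := htr2 k l n m keyC
        have ha'root := ha'P (psiZ k) haevZ
        have ha'eq : a'^k * (2 - a') = 1 := psi_root_eq k ha'root
        have ha'1 : a' ≠ 1 := by
          intro h1; rw [h1] at ha'root; exact psi_one_ne k hk2 ha'root
        have ha'abs : Complex.abs a' < 1 :=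
          croot k hk2 hα1 hα2 hαx ha'eq ha'1 (by rw [← haC]; exact ha'ne)
        have hzp : Complex.abs (a'^(n-1)) ≤ 1 := by
          rw [map_zpow₀]
          exact zpow_le_one_aux (Complex.abs.nonneg a') ha'abs.le (by omega)
        have hAb : Complex.abs (Aex k a') ≤ 6 := conj_bound k hk2 ha'abs.le
        have hsmall : Complex.abs (a'^(n-1) * Aex k a') ≤ 6 := by
          rw [map_mul]
          nlinarith [Complex.abs.nonneg (a'^(n-1)), Complex.abs.nonneg (Aex k a')]
        rw [heq2] at hsmall
        linarith
    · -- conjugate b over ℚ(a)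
      obtain ⟨b', hb'ne, hb'P, htr1, _⟩ :=
        exists_conj ℚ⟮a⟯ b a (IntermediateField.mem_adjoin_simple_self ℚ a) hbintQ hbE
      have heq2 := htr1 k l n m keyC
      have hb'root := hb'P (psiZ l) hbevZ
      have hb'eq : b'^l * (2 - b') = 1 := psi_root_eq l hb'root
      have hb'1 : b' ≠ 1 := by
        intro h1; rw [h1] at hb'root; exact psi_one_ne l hl hb'root
      have hb'abs : Complex.abs b' < 1 :=
        croot l hl hβ1 hβ2 hβx hb'eq hb'1 (by rw [← hbC]; exact hb'ne)
      have hzp : Complex.abs (b'^(m-1)) ≤ 1 := by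
        rw [map_zpow₀]
        exact zpow_le_one_aux (Complex.abs.nonneg b') hb'abs.le (by omega)
      have hBb : Complex.abs (Aex l b') ≤ 6 := conj_bound l hl hb'abs.le
      have hsmall : Complex.abs (b'^(m-1) * Aex l b') ≤ 6 := by
        rw [map_mul]
        nlinarith [Complex.abs.nonneg (b'^(m-1)), Complex.abs.nonneg (Aex l b')]
      rw [← heq2, keyC] at hsmall
      linarith
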